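/- Let G be a finite simple graph and d ≥ 1 an integer. Let C and D be disjoint cliques of G such that C has size 1 or size at least 2d+1, D has size at least 2d+1, and some vertex u ∈ C has more than d neighbors in D. Let G₁ be the graph obtained from G by adding all edges between C and D. Then: (a) for every d-cut (A, B) of G, either C ∪ D ⊆ A or C ∪ D ⊆ B; and (b) a set of edges F ⊆ E(G) is the edge cut of a d-cut of G if and only if F is the edge cut of a d-cut of G₁. -/
import Mathlib


variable {V : Type*}

/-- A `d`-cut of a simple graph `G`: a partition `(A, B)` of the vertex set into two
nonempty parts such that every vertex of `A` has at most `d` neighbors in `B` and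
every vertex of `B` has at most `d` neighbors in `A`. -/
def IsDCut (G : SimpleGraph V) (d : ℕ) (A B : Set V) : Prop :=
  A.Nonempty ∧ B.Nonempty ∧ Disjoint A B ∧ A ∪ B = Set.univ ∧
    (∀ v ∈ A, (G.neighborSet v ∩ B).ncard ≤ d) ∧
    (∀ v ∈ B, (G.neighborSet v ∩ A).ncard ≤ d)

/-- A vertex set `T` is monochromatic if every `d`-cut of `G` has `T` entirely on one side. -/
def Monochromatic (G : SimpleGraph V) (d : ℕ) (T : Set V) : Prop :=
  ∀ A B : Set V, IsDCut G d A B → T ⊆ A ∨ T ⊆ B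

/-- The edge cut of a cut `(A, B)`: the set of edges of `G` with one endpoint in `A`
and the other endpoint in `B`. -/
def edgeCut (G : SimpleGraph V) (A B : Set V) : Set (Sym2 V) :=
  {e | e ∈ G.edgeSet ∧ ∃ u v, e = s(u, v) ∧ u ∈ A ∧ v ∈ B}

/-- A minimal `d`-cut: no `d`-cut has an edge cut that is a proper subset of its edge cut. -/
def IsMinimalDCut (G : SimpleGraph V) (d : ℕ) (A B : Set V) : Prop :=
  IsDCut G d A B ∧ ∀ A' B' : Set V, IsDCut G d A' B' → ¬ edgeCut G A' B' ⊂ edgeCut G A B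

/-- A maximal `d`-cut: no `d`-cut has an edge cut that properly contains its edge cut. -/
def IsMaximalDCut (G : SimpleGraph V) (d : ℕ) (A B : Set V) : Prop :=
  IsDCut G d A B ∧ ∀ A' B' : Set V, IsDCut G d A' B' → ¬ edgeCut G A B ⊂ edgeCut G A' B'

/-- The graph obtained from `G` by adding all edges between `C` and `D`. -/
def addAllEdges (G : SimpleGraph V) (C D : Set V) : SimpleGraph V :=
  SimpleGraph.fromRel (fun x y => G.Adj x y ∨ (x ∈ C ∧ y ∈ D))

lemma isDCut_comm {G : SimpleGraph V} {d : ℕ} {A B : Set V} (h : IsDCut G d A B) :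
    IsDCut G d B A := by
  obtain ⟨h1, h2, h3, h4, h5, h6⟩ := h
  exact ⟨h2, h1, h3.symm, by rw [Set.union_comm]; exact h4, h6, h5⟩

lemma edgeCut_comm (G : SimpleGraph V) (A B : Set V) : edgeCut G A B = edgeCut G B A := by
  ext e
  constructor <;> rintro ⟨he, x, y, rfl, hx, hy⟩
  · exact ⟨he, y, x, Sym2.eq_swap, hy, hx⟩
  · exact ⟨he, y, x, Sym2.eq_swap, hy, hx⟩

lemma adj_addAllEdges (G : SimpleGraph V) (C D : Set V) {x y : V} (hy : y ∉ C ∪ D) :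
    (addAllEdges G C D).Adj x y ↔ G.Adj x y := by
  simp only [addAllEdges, SimpleGraph.fromRel_adj]
  constructor
  · rintro ⟨hne, (h | ⟨_, hyD⟩) | (h | ⟨hyC, _⟩)⟩
    · exact h
    · exact absurd (Or.inr hyD) hy
    · exact h.symm
    · exact absurd (Or.inl hyC) hy
  · intro h; exact ⟨h.ne, Or.inl (Or.inl h)⟩

lemma le_addAllEdges (G : SimpleGraph V) (C D : Set V) : G ≤ addAllEdges G C D := by
  intro x y h
  exact (SimpleGraph.fromRel_adj _ x y).mpr ⟨h.ne, Or.inl (Or.inl h)⟩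

lemma clique_mono [Fintype V] {G : SimpleGraph V} {d : ℕ} {K : Set V} (hK : G.IsClique K)
    (hKsize : 2 * d + 1 ≤ K.ncard) {A B : Set V} (h : IsDCut G d A B) :
    K ⊆ A ∨ K ⊆ B := by
  obtain ⟨-, -, hdisj, huniv, hA, hB⟩ := h
  by_contra hcon
  push_neg at hcon
  obtain ⟨h1, h2⟩ := hcon
  obtain ⟨a, haK, haA⟩ := Set.not_subset.mp h1
  obtain ⟨b, hbK, hbB⟩ := Set.not_subset.mp h2
  have haB : a ∈ B := by
    have := Set.mem_univ a; rw [← huniv] at this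
    rcases this with h | h
    · exact absurd h haA
    · exact h
  have hbA : b ∈ A := by
    have := Set.mem_univ b; rw [← huniv] at this
    rcases this with h | h
    · exact h
    · exact absurd h hbB
  have hsplit : (K ∩ A).ncard + (K ∩ B).ncard = K.ncard := by
    rw [← Set.ncard_union_eq
      (Set.disjoint_of_subset Set.inter_subset_right Set.inter_subset_right hdisj)
      (Set.toFinite _) (Set.toFinite _)]
    rw [← Set.inter_union_distrib_left, huniv, Set.inter_univ]
  have key : ∀ s t : Set V, ∀ c, c ∈ K → c ∈ t → Disjoint s t →
      K ∩ s ⊆ G.neighborSet c ∩ s := by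
    rintro s t c hcK hct hst w ⟨hwK, hws⟩
    have hne : c ≠ w := fun h => (hst.ne_of_mem hws hct) (h ▸ rfl)
    exact ⟨hK hcK hwK hne, hws⟩
  rcases Nat.lt_or_ge (K ∩ A).ncard (d + 1) with hlt | hge
  · have h1 : d + 1 ≤ (K ∩ B).ncard := by omega
    have h2 := Set.ncard_le_ncard (key B A b hbK hbA hdisj.symm) (Set.toFinite _)
    have h3 := hA b hbA
    omega
  · have h2 := Set.ncard_le_ncard (key A B a haK haB hdisj) (Set.toFinite _)
    have h3 := hB a haB
    omega

lemma side_aux [Fintype V] {G : SimpleGraph V} {d : ℕ} {C D : Set V}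
    (hC : G.IsClique C)
    (hCsize : C.ncard = 1 ∨ 2 * d + 1 ≤ C.ncard)
    {u : V} (hu : u ∈ C) (hud : d < (G.neighborSet u ∩ D).ncard)
    {A B : Set V} (h : IsDCut G d A B) (hDA : D ⊆ A) : C ∪ D ⊆ A := by
  have hdisj := h.2.2.1
  have huniv := h.2.2.2.1
  have hB := h.2.2.2.2.2
  have huA : u ∈ A := by
    by_contra huA
    have huB : u ∈ B := by
      have := Set.mem_univ u
      rw [← huniv] at this
      rcases this with h | h
      · exact absurd h huA
      · exact h
    have hle : (G.neighborSet u ∩ D).ncard ≤ (G.neighborSet u ∩ A).ncard :=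
      Set.ncard_le_ncard (Set.inter_subset_inter_right _ hDA) (Set.toFinite _)
    have := hB u huB
    omega
  have hCA : C ⊆ A := by
    rcases hCsize with h1 | h1
    · obtain ⟨x, hx⟩ := Set.ncard_eq_one.mp h1
      have : x = u := by rw [hx] at hu; exact hu.symm
      rw [hx, this, Set.singleton_subset_iff]; exact huA
    · rcases clique_mono hC h1 h with hh | hh
      · exact hh
      · exact absurd rfl (hdisj.ne_of_mem huA (hh hu))
  exact Set.union_subset hCA hDA

lemma partA_aux [Fintype V] {G : SimpleGraph V} {d : ℕ} {C D : Set V}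
    (hC : G.IsClique C) (hD : G.IsClique D)
    (hCsize : C.ncard = 1 ∨ 2 * d + 1 ≤ C.ncard) (hDsize : 2 * d + 1 ≤ D.ncard)
    {u : V} (hu : u ∈ C) (hud : d < (G.neighborSet u ∩ D).ncard)
    {A B : Set V} (h : IsDCut G d A B) : C ∪ D ⊆ A ∨ C ∪ D ⊆ B := by
  rcases clique_mono hD hDsize h with hDA | hDB
  · exact Or.inl (side_aux hC hCsize hu hud h hDA)
  · exact Or.inr (side_aux hC hCsize hu hud (isDCut_comm h) hDB)

lemma transfer_cut [Fintype V] (G : SimpleGraph V) (d : ℕ) (C D : Set V) {A B : Set V}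
    (hsub : C ∪ D ⊆ A) (hdisj : Disjoint A B) :
    (IsDCut G d A B ↔ IsDCut (addAllEdges G C D) d A B) ∧
      edgeCut G A B = edgeCut (addAllEdges G C D) A B := by
  have hBnot : ∀ w ∈ B, w ∉ C ∪ D := fun w hw hcd =>
    (hdisj.ne_of_mem (hsub hcd) hw) rfl
  have navA : ∀ v, (addAllEdges G C D).neighborSet v ∩ B = G.neighborSet v ∩ B := by
    intro v
    ext w
    simp only [Set.mem_inter_iff, SimpleGraph.mem_neighborSet, and_congr_left_iff]
    intro hw
    exact adj_addAllEdges G C D (hBnot w hw)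
  have navB : ∀ v ∈ B, (addAllEdges G C D).neighborSet v ∩ A = G.neighborSet v ∩ A := by
    intro v hv
    ext w
    simp only [Set.mem_inter_iff, SimpleGraph.mem_neighborSet, and_congr_left_iff]
    intro _
    rw [SimpleGraph.adj_comm, adj_addAllEdges G C D (hBnot v hv), SimpleGraph.adj_comm]
  constructor
  · constructor
    · rintro ⟨h1, h2, h3, h4, h5, h6⟩
      refine ⟨h1, h2, h3, h4, fun v hv => ?_, fun v hv => ?_⟩
      · rw [navA]; exact h5 v hv
      · rw [navB v hv]; exact h6 v hv
    · rintro ⟨h1, h2, h3, h4, h5, h6⟩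
      refine ⟨h1, h2, h3, h4, fun v hv => ?_, fun v hv => ?_⟩
      · rw [← navA]; exact h5 v hv
      · rw [← navB v hv]; exact h6 v hv
  · ext e
    constructor <;> rintro ⟨he, x, y, rfl, hx, hy⟩
    · refine ⟨(SimpleGraph.mem_edgeSet _).mpr ?_, x, y, rfl, hx, hy⟩
      exact (adj_addAllEdges G C D (hBnot y hy)).mpr ((SimpleGraph.mem_edgeSet _).mp he)
    · refine ⟨(SimpleGraph.mem_edgeSet _).mpr ?_, x, y, rfl, hx, hy⟩
      exact (adj_addAllEdges G C D (hBnot y hy)).mp ((SimpleGraph.mem_edgeSet _).mp he)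

/-- Merging two cliques: if `C` and `D` are disjoint cliques, `C` has size `1` or at
least `2d+1`, `D` has size at least `2d+1`, and some `u ∈ C` has more than `d`
neighbors in `D`, then (a) every `d`-cut of `G` has `C ∪ D` entirely on one side, and
(b) `F ⊆ E(G)` is the edge cut of a `d`-cut of `G` iff it is the edge cut of a `d`-cut
of the graph `G₁` obtained by adding all edges between `C` and `D`. -/
theorem merge_cliques_dcut [Fintype V] (G : SimpleGraph V) (d : ℕ) (hd : 1 ≤ d)
    (C D : Set V) (hdisj : Disjoint C D) (hC : G.IsClique C) (hD : G.IsClique D)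
    (hCsize : C.ncard = 1 ∨ 2 * d + 1 ≤ C.ncard) (hDsize : 2 * d + 1 ≤ D.ncard)
    (u : V) (hu : u ∈ C) (hud : d < (G.neighborSet u ∩ D).ncard) :
    (∀ A B : Set V, IsDCut G d A B → C ∪ D ⊆ A ∨ C ∪ D ⊆ B) ∧
    (∀ F : Set (Sym2 V), F ⊆ G.edgeSet →
      ((∃ A B : Set V, IsDCut G d A B ∧ edgeCut G A B = F) ↔
       (∃ A B : Set V, IsDCut (addAllEdges G C D) d A B ∧
          edgeCut (addAllEdges G C D) A B = F))) := by
  have hadj : ∀ x y, G.Adj x y → (addAllEdges G C D).Adj x y := le_addAllEdges G C D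
  have hC₁ : (addAllEdges G C D).IsClique C := fun _ hx _ hy hne => hadj _ _ (hC hx hy hne)
  have hD₁ : (addAllEdges G C D).IsClique D := fun _ hx _ hy hne => hadj _ _ (hD hx hy hne)
  have hud₁ : d < ((addAllEdges G C D).neighborSet u ∩ D).ncard :=
    lt_of_lt_of_le hud (Set.ncard_le_ncard
      (Set.inter_subset_inter_left _ (fun w hw => hadj u w hw)) (Set.toFinite _))
  have partA : ∀ A B : Set V, IsDCut G d A B → C ∪ D ⊆ A ∨ C ∪ D ⊆ B :=
    fun A B h => partA_aux hC hD hCsize hDsize hu hud h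
  refine ⟨partA, fun F hF => ⟨?_, ?_⟩⟩
  · rintro ⟨A, B, hcut, rfl⟩
    rcases partA A B hcut with hsub | hsub
    · obtain ⟨hiff, hec⟩ := transfer_cut G d C D hsub hcut.2.2.1
      exact ⟨A, B, hiff.mp hcut, hec.symm⟩
    · obtain ⟨hiff, hec⟩ := transfer_cut G d C D hsub (isDCut_comm hcut).2.2.1
      exact ⟨B, A, hiff.mp (isDCut_comm hcut), by rw [← hec, edgeCut_comm]⟩
  · rintro ⟨A, B, hcut, rfl⟩
    rcases partA_aux hC₁ hD₁ hCsize hDsize hu hud₁ hcut with hsub | hsub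
    · obtain ⟨hiff, hec⟩ := transfer_cut G d C D hsub hcut.2.2.1
      exact ⟨A, B, hiff.mpr hcut, hec⟩
    · obtain ⟨hiff, hec⟩ := transfer_cut G d C D hsub (isDCut_comm hcut).2.2.1
      exact ⟨B, A, hiff.mpr (isDCut_comm hcut), by rw [hec, edgeCut_comm]⟩
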